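/- arXiv:2209.06891 — 2 statements merged into one kernel-verified Lean document; each statement's English description precedes it below -/
import Mathlib

section
/- Let k ≥ 8 be an integer and let r_1, ..., r_{k+1} be nonnegative integers with sum k + δ for some integer δ ≥ 0. Write δ = n(k+1) + i with n ≥ 0 and 0 ≤ i ≤ k. Let σ be a permutation of {1, ..., k+1} with r_{σ(1)} ≤ ... ≤ r_{σ(k+1)}. If r_{σ(k)} ≤ n, then 1 + ⌊3(n+1)/2⌋ ≤ r_{σ(k)} + ⌊(r_{σ(k+1)} − 1)/2⌋. -/
theorem arithmetic_case_two
    (k : ℕ) (hk : 8 ≤ k) (r : Fin (k + 1) → ℕ) (δ n i : ℕ)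
    (hsum : ∑ j, r j = k + δ)
    (hni : δ = n * (k + 1) + i) (hik : i ≤ k)
    (σ : Equiv.Perm (Fin (k + 1)))
    (hσ : Monotone fun j => r (σ j))
    (h : r (σ ⟨k - 1, by omega⟩) ≤ n) :
    1 + 3 * (n + 1) / 2 ≤ r (σ ⟨k - 1, by omega⟩) + (r (σ (Fin.last k)) - 1) / 2 := by
  set m := r (σ ⟨k - 1, by omega⟩) with hm
  set L := r (σ (Fin.last k)) with hL
  have hperm : ∑ j, r (σ j) = k + δ := by
    rw [← hsum]; exact Fintype.sum_equiv σ _ _ (fun j => rfl)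
  have hsplit : ∑ j : Fin (k + 1), r (σ j)
      = (∑ j : Fin k, r (σ j.castSucc)) + L := by
    rw [Fin.sum_univ_castSucc]
  have hbound : ∑ j : Fin k, r (σ j.castSucc) ≤ k * m := by
    calc ∑ j : Fin k, r (σ j.castSucc) ≤ ∑ _j : Fin k, m :=
          Finset.sum_le_sum (fun j _ => by
            refine hσ ?_
            have := j.isLt
            simp only [Fin.le_def, Fin.coe_castSucc]
            omega)
      _ = k * m := by simp [Finset.sum_const, Nat.mul_comm]
  have hkey : k + n * (k + 1) + i ≤ k * m + L := by
    rw [hni] at hperm; omega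
  have hmul1 : k * m + k * (n - m) = n * k := by
    rw [← Nat.mul_add, Nat.add_sub_cancel' h, Nat.mul_comm]
  have hmul2 : 8 * (n - m) ≤ k * (n - m) := Nat.mul_le_mul_right _ hk
  have hnk : n * (k + 1) = n * k + n := by ring
  omega
end

section
/- Let w be a finite word over the alphabet {a,b} of the form w = a^{r_1} b a^{r_2} b ... a^{r_k} b a^{r_{k+1}}, where r_1, ..., r_{k+1} are nonnegative integers, with |w|_a ≥ |w|_b = k ≥ 10. Let δ = |w|_a − k, and write δ = n(k+1) + i with n ≥ 0 and 0 ≤ i ≤ k. Let σ be a permutation of {1, ..., k+1} with r_{σ(1)} ≤ ... ≤ r_{σ(k+1)}. If r_{σ(k)} = n + 1 and r_{σ(k+1)} ≤ n + 3, then s(w) + 1 + ⌊3n/2 + 3i/(2(k+1))⌋ ≤ m(w) + r_{σ(k)}. -/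
/-- `numPowers w` is the number of distinct nonempty factors of `w` that are
powers of exponent at least 2, i.e. of the form `u^j` with `u` nonempty and `j ≥ 2`. -/
noncomputable def numPowers {α : Type*} (w : List α) : ℕ :=
  Set.ncard {v : List α | v <:+: w ∧
    ∃ u : List α, u ≠ [] ∧ ∃ j : ℕ, 2 ≤ j ∧ v = (List.replicate j u).flatten}

/-- `numSquares w` is the number of distinct squares occurring as factors of `w`. -/
noncomputable def numSquares {α : Type*} (w : List α) : ℕ :=
  Set.ncard {v : List α | v <:+: w ∧ ∃ u : List α, u ≠ [] ∧ v = u ++ u}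

/-- The binary word `a^{r 0} b a^{r 1} b ⋯ a^{r (k-1)} b a^{r k}` over the
alphabet `Bool`, where `a := false` and `b := true`. -/
def binWord (k : ℕ) (r : Fin (k + 1) → ℕ) : List Bool :=
  (List.ofFn (fun j : Fin k => List.replicate (r j.castSucc) false ++ [true])).flatten
    ++ List.replicate (r (Fin.last k)) false

lemma flatten_replicate_singleton {α : Type*} (m : ℕ) (a : α) :
    (List.replicate m [a]).flatten = List.replicate m a := by
  induction m with
  | zero => simp
  | succ m ih => simp [List.replicate_succ, ih]

lemma count_false_binWord (k : ℕ) (r : Fin (k + 1) → ℕ) :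
    (binWord k r).count false = ∑ j, r j := by
  rw [Fin.sum_univ_castSucc]
  simp [binWord, List.count_flatten, List.count_replicate, Function.comp_def,
    List.count_append, List.sum_ofFn]

lemma replicate_infix_binWord (k : ℕ) (r : Fin (k + 1) → ℕ) (j : Fin (k + 1)) :
    List.replicate (r j) false <:+: binWord k r := by
  induction j using Fin.lastCases with
  | last => exact (List.suffix_append _ _).isInfix
  | cast jj =>
      have h1 : List.replicate (r jj.castSucc) false <+:
          List.replicate (r jj.castSucc) false ++ [true] := List.prefix_append _ _
      have h2 : (List.replicate (r jj.castSucc) false ++ [true]) <:+: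
          (List.ofFn (fun j : Fin k =>
            List.replicate (r j.castSucc) false ++ [true])).flatten := by
        apply List.infix_of_mem_flatten
        rw [List.mem_ofFn]
        exact ⟨jj, rfl⟩
      exact (h1.isInfix.trans h2).trans (List.prefix_append _ _).isInfix

theorem case_four_bound
    (k : ℕ) (hk : 10 ≤ k) (r : Fin (k + 1) → ℕ) (δ n i : ℕ)
    (hab : (binWord k r).count true ≤ (binWord k r).count false)
    (hδ : (binWord k r).count false = k + δ)
    (hni : δ = n * (k + 1) + i) (hik : i ≤ k)
    (σ : Equiv.Perm (Fin (k + 1)))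
    (hσ : Monotone fun j => r (σ j))
    (h1 : r (σ ⟨k - 1, by omega⟩) = n + 1)
    (h2 : r (σ (Fin.last k)) ≤ n + 3) :
    (numSquares (binWord k r) : ℤ) + 1 +
        ⌊(3 * (n : ℚ) / 2 + 3 * (i : ℚ) / (2 * ((k : ℚ) + 1)))⌋ ≤
      (numPowers (binWord k r) : ℤ) + r (σ ⟨k - 1, by omega⟩) := by
  obtain ⟨m, hm1, hm2⟩ : ∃ m, 2 * m ≤ n ∧ n ≤ 2 * m + 1 := ⟨n / 2, by omega, by omega⟩
  -- sum of r equals k + δ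
  have hsum : ∑ j, r (σ j) = k + δ := by
    rw [Equiv.sum_comp σ r, ← count_false_binWord k r, hδ]
  -- i ≤ 3
  have hi3 : i ≤ 3 := by
    have hbound : ∀ j : Fin k, r (σ j.castSucc) ≤ n + 1 := by
      intro j
      rw [← h1]
      exact hσ (by simp [Fin.le_def]; omega)
    have hb2 : ∑ j, r (σ j) ≤ k * (n + 1) + (n + 3) := by
      rw [Fin.sum_univ_castSucc]
      have : ∑ j : Fin k, r (σ j.castSucc) ≤ ∑ _j : Fin k, (n + 1) :=
        Finset.sum_le_sum fun j _ => hbound j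
      simp only [Finset.sum_const, Finset.card_univ, Fintype.card_fin, smul_eq_mul] at this
      omega
    rw [hsum] at hb2
    nlinarith [hni]
  -- floor bound
  have hfloor : ⌊(3 * (n : ℚ) / 2 + 3 * (i : ℚ) / (2 * ((k : ℚ) + 1)))⌋ ≤
      (n : ℤ) + (m : ℤ) := by
    rw [Int.floor_le_iff]
    have hcast : (((n : ℤ) + (m : ℤ) : ℤ) : ℚ) = (n : ℚ) + (m : ℚ) := by push_cast; ring
    rw [hcast]
    have hk1 : (0 : ℚ) < (k : ℚ) + 1 := by positivity
    have h1q : 3 * (i : ℚ) / (2 * ((k : ℚ) + 1)) ≤ 9 / 22 := by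
      rw [div_le_div_iff₀ (by positivity) (by norm_num)]
      have hi' : (i : ℚ) ≤ 3 := by exact_mod_cast hi3
      have hk' : (10 : ℚ) ≤ (k : ℚ) := by exact_mod_cast hk
      nlinarith
    have h2q : 3 * (n : ℚ) / 2 ≤ (n : ℚ) + (m : ℚ) + 1 / 2 := by
      have : (n : ℚ) ≤ 2 * (m : ℚ) + 1 := by exact_mod_cast hm2
      linarith
    linarith
  -- combinatorial core : numSquares + m ≤ numPowers
  have hcore : numSquares (binWord k r) + m ≤ numPowers (binWord k r) := by
    set S : Set (List Bool) :=
      {v | v <:+: binWord k r ∧ ∃ u : List Bool, u ≠ [] ∧ v = u ++ u} with hS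
    set P : Set (List Bool) :=
      {v | v <:+: binWord k r ∧ ∃ u : List Bool, u ≠ [] ∧
        ∃ j : ℕ, 2 ≤ j ∧ v = (List.replicate j u).flatten} with hP
    set T : Set (List Bool) :=
      (fun j => List.replicate (2 * j + 1) false) '' (Set.Icc 1 m) with hT
    have hPfin : P.Finite := by
      apply ((binWord k r).sublists.finite_toSet).subset
      intro v hv
      exact List.mem_sublists.mpr hv.1.sublist
    have hrep : List.replicate (n + 1) false <:+: binWord k r := by
      have := replicate_infix_binWord k r (σ ⟨k - 1, by omega⟩)
      rwa [h1] at this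
    have hTP : T ⊆ P := by
      rintro v ⟨j, ⟨hj1, hj2⟩, rfl⟩
      constructor
      · refine List.IsInfix.trans ?_ hrep
        refine List.IsPrefix.isInfix ⟨List.replicate (n + 1 - (2 * j + 1)) false, ?_⟩
        rw [← List.replicate_add]
        congr 1
        omega
      · exact ⟨[false], by simp, 2 * j + 1, by omega,
          (flatten_replicate_singleton _ _).symm⟩
    have hSP : S ⊆ P := by
      rintro v ⟨hv, u, hu, rfl⟩
      exact ⟨hv, u, hu, 2, le_refl 2, by simp [List.replicate_succ]⟩
    have hdisj : Disjoint S T := by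
      rw [Set.disjoint_left]
      rintro v ⟨_, u, hu, rfl⟩ ⟨j, _, hv⟩
      have e3 := congrArg List.length hv
      simp only [List.length_replicate, List.length_append] at e3
      omega
    have hTfin : T.Finite := (Set.finite_Icc _ _).image _
    have hSfin : S.Finite := hPfin.subset hSP
    have hTcard : T.ncard = m := by
      rw [hT, Set.ncard_image_of_injective _ ?_, ← Finset.coe_Icc,
        Set.ncard_coe_finset, Nat.card_Icc]
      · omega
      · intro a b hab2
        have := congrArg List.length hab2
        simp at this
        omega
    have hun : S.ncard + T.ncard = (S ∪ T).ncard :=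
      (Set.ncard_union_eq hdisj hSfin hTfin).symm
    have hle : (S ∪ T).ncard ≤ P.ncard :=
      Set.ncard_le_ncard (Set.union_subset hSP hTP) hPfin
    have e1 : numSquares (binWord k r) = S.ncard := rfl
    have e2 : numPowers (binWord k r) = P.ncard := rfl
    rw [e1, e2]
    omega
  have hcore' : (numSquares (binWord k r) : ℤ) + (m : ℤ) ≤ (numPowers (binWord k r) : ℤ) := by
    exact_mod_cast hcore
  rw [h1]
  push_cast
  omega
end
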